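/- Let 1 ≤ p ≤ 2. Then there exists a real Hilbert space H and a mapping S : ℓ_p → H such that ‖S(x) − S(y)‖_H = ‖x − y‖_p^{p/2} for all x, y ∈ ℓ_p. In other words, the (p/2)-snowflake of ℓ_p embeds isometrically into a Hilbert space. -/

import Mathlib

open MeasureTheory Set Filter
open scoped ENNReal

noncomputable section SnowflakeAux

local notation "μ₀" => MeasureTheory.volume.restrict (Set.Ioi (0:ℝ))

/-- base integrand -/
def snowG (p : ℝ) (s : ℝ) : ℝ := (2 - 2 * Real.cos s) * s ^ (-1 - p)

lemma snowG_nonneg (p : ℝ) {s : ℝ} (hs : 0 < s) : 0 ≤ snowG p s :=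
  mul_nonneg (by nlinarith [Real.cos_le_one s]) (Real.rpow_nonneg hs.le _)

lemma contOn_rpow (c : ℝ) : ContinuousOn (fun s : ℝ => s ^ c) (Set.Ioi 0) :=
  fun x hx => (Real.continuousAt_rpow_const x c (Or.inl (ne_of_gt hx))).continuousWithinAt

lemma snowG_contOn (p : ℝ) : ContinuousOn (snowG p) (Set.Ioi 0) :=
  (continuous_const.sub (continuous_const.mul Real.continuous_cos)).continuousOn.mul
    (contOn_rpow _)

lemma snowG_integrable {p : ℝ} (hp1 : 1 ≤ p) (hp2 : p < 2) :
    IntegrableOn (snowG p) (Set.Ioi 0) := by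
  have h01 : IntegrableOn (snowG p) (Set.Ioc (0:ℝ) 1) := by
    have hmeas : AEStronglyMeasurable (snowG p) (volume.restrict (Set.Ioc (0:ℝ) 1)) :=
      ((snowG_contOn p).mono Set.Ioc_subset_Ioi_self).aestronglyMeasurable measurableSet_Ioc
    have hint : IntegrableOn (fun s : ℝ => s ^ (1 - p)) (Set.Ioc (0:ℝ) 1) := by
      have := intervalIntegral.intervalIntegrable_rpow' (a := 0) (b := 1)
        (show (-1:ℝ) < 1 - p by linarith)
      rw [intervalIntegrable_iff, Set.uIoc_of_le zero_le_one] at this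
      exact this
    refine Integrable.mono hint hmeas ?_
    refine (ae_restrict_iff' measurableSet_Ioc).2 (Filter.Eventually.of_forall fun s hs => ?_)
    have hs0 : 0 < s := hs.1
    have hb : 2 - 2 * Real.cos s ≤ s ^ 2 := by
      nlinarith [Real.one_sub_sq_div_two_le_cos (x := s)]
    have h1 : snowG p s ≤ s ^ (1 - p) := by
      have : s ^ (2:ℝ) * s ^ (-1 - p) = s ^ (1 - p) := by
        rw [← Real.rpow_add hs0]; congr 1; ring
      calc snowG p s ≤ s ^ 2 * s ^ (-1 - p) :=
            mul_le_mul_of_nonneg_right hb (Real.rpow_nonneg hs0.le _)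
        _ = s ^ (1 - p) := by
            rw [← this]; congr 1
            rw [← Real.rpow_natCast s 2]; norm_num
    rw [Real.norm_eq_abs, Real.norm_eq_abs, abs_of_nonneg (snowG_nonneg p hs0),
      abs_of_nonneg (Real.rpow_nonneg hs0.le _)]
    exact h1
  have h1i : IntegrableOn (snowG p) (Set.Ioi (1:ℝ)) := by
    have hmeas : AEStronglyMeasurable (snowG p) (volume.restrict (Set.Ioi (1:ℝ))) :=
      ((snowG_contOn p).mono (Set.Ioi_subset_Ioi zero_le_one)).aestronglyMeasurable
        measurableSet_Ioi
    have hint : IntegrableOn (fun s : ℝ => 4 * s ^ (-1 - p)) (Set.Ioi (1:ℝ)) :=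
      (integrableOn_Ioi_rpow_of_lt (show -1 - p < -1 by linarith) one_pos).const_mul 4
    refine Integrable.mono hint hmeas ?_
    refine (ae_restrict_iff' measurableSet_Ioi).2 (Filter.Eventually.of_forall fun s hs => ?_)
    have hs0 : (0:ℝ) < s := lt_trans one_pos hs
    have hb : 2 - 2 * Real.cos s ≤ 4 := by nlinarith [Real.neg_one_le_cos s]
    rw [Real.norm_eq_abs, Real.norm_eq_abs, abs_of_nonneg (snowG_nonneg p hs0),
      abs_of_nonneg (by positivity : (0:ℝ) ≤ 4 * s ^ (-1 - p))]
    exact mul_le_mul_of_nonneg_right hb (Real.rpow_nonneg hs0.le _)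
  have : Set.Ioc (0:ℝ) 1 ∪ Set.Ioi 1 = Set.Ioi (0:ℝ) := Set.Ioc_union_Ioi_eq_Ioi zero_le_one
  rw [← this]
  exact h01.union h1i

/-- normalization constant -/
def snowK (p : ℝ) : ℝ := ∫ s in Set.Ioi (0:ℝ), snowG p s

lemma snowGt_eq {p : ℝ} {a : ℝ} (ha : 0 < a) {s : ℝ} (hs : s ∈ Set.Ioi (0:ℝ)) :
    (2 - 2 * Real.cos (s * a)) * s ^ (-1 - p) = a ^ (1 + p) * snowG p (a * s) := by
  have hs0 : (0:ℝ) < s := hs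
  rw [snowG, mul_comm s a]
  rw [Real.mul_rpow ha.le hs0.le]
  have : a ^ (1 + p) * ((2 - 2 * Real.cos (a * s)) * (a ^ (-1 - p) * s ^ (-1 - p)))
      = (a ^ (1 + p) * a ^ (-1 - p)) * ((2 - 2 * Real.cos (a * s)) * s ^ (-1 - p)) := by ring
  rw [this, ← Real.rpow_add ha]
  norm_num

lemma snowGt_integrable {p : ℝ} (hp1 : 1 ≤ p) (hp2 : p < 2) (t : ℝ) :
    IntegrableOn (fun s : ℝ => (2 - 2 * Real.cos (s * t)) * s ^ (-1 - p)) (Set.Ioi 0) := by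
  rcases eq_or_ne t 0 with rfl | ht
  · have : (fun s : ℝ => (2 - 2 * Real.cos (s * 0)) * s ^ (-1 - p)) = fun _ => (0:ℝ) := by
      funext s; simp
    rw [this]; exact integrableOn_zero
  · have ha : 0 < |t| := abs_pos.2 ht
    have hcos : ∀ s : ℝ, Real.cos (s * t) = Real.cos (s * |t|) := by
      intro s
      rcases abs_choice t with h | h
      · rw [h]
      · rw [h, mul_neg, Real.cos_neg]
    have hbase : IntegrableOn (fun s : ℝ => |t| ^ (1 + p) * snowG p (|t| * s)) (Set.Ioi 0) := by
      have := (integrableOn_Ioi_comp_mul_left_iff (snowG p) 0 ha).2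
        (by simpa using snowG_integrable hp1 hp2)
      exact this.const_mul _
    refine hbase.congr_fun (fun s hs => ?_) measurableSet_Ioi
    rw [hcos s]
    exact (snowGt_eq ha hs).symm


lemma snowGt_integral {p : ℝ} (hp1 : 1 ≤ p) (t : ℝ) :
    ∫ s in Set.Ioi (0:ℝ), (2 - 2 * Real.cos (s * t)) * s ^ (-1 - p)
      = |t| ^ p * snowK p := by
  rcases eq_or_ne t 0 with rfl | ht
  · have : (fun s : ℝ => (2 - 2 * Real.cos (s * 0)) * s ^ (-1 - p)) = fun _ => (0:ℝ) := by
      funext s; simp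
    rw [this]
    simp [Real.zero_rpow (show p ≠ 0 by linarith)]
  · have ha : 0 < |t| := abs_pos.2 ht
    have hcos : ∀ s : ℝ, Real.cos (s * t) = Real.cos (s * |t|) := by
      intro s
      rcases abs_choice t with h | h
      · rw [h]
      · rw [h, mul_neg, Real.cos_neg]
    have h1 : ∫ s in Set.Ioi (0:ℝ), (2 - 2 * Real.cos (s * t)) * s ^ (-1 - p)
        = ∫ s in Set.Ioi (0:ℝ), |t| ^ (1 + p) * snowG p (|t| * s) := by
      refine setIntegral_congr_fun measurableSet_Ioi (fun s hs => ?_)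
      rw [hcos s]
      exact snowGt_eq ha hs
    rw [h1, MeasureTheory.integral_const_mul,
      MeasureTheory.integral_comp_mul_left_Ioi (snowG p) 0 ha, mul_zero]
    rw [smul_eq_mul, ← mul_assoc]
    congr 1
    rw [← Real.rpow_neg_one |t|, ← Real.rpow_add ha]
    congr 1; ring

lemma snowK_pos {p : ℝ} (hp1 : 1 ≤ p) (hp2 : p < 2) : 0 < snowK p := by
  rw [snowK]
  rw [setIntegral_pos_iff_support_of_nonneg_ae]
  · have hsub : Set.Ioi (0:ℝ) \ {s : ℝ | Real.cos s = 1}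
        ⊆ Function.support (snowG p) ∩ Set.Ioi 0 := by
      rintro s ⟨hs, hcs⟩
      refine ⟨?_, hs⟩
      have hs0 : (0:ℝ) < s := hs
      have h1 : Real.cos s < 1 := lt_of_le_of_ne (Real.cos_le_one s) (by exact hcs)
      have : 0 < snowG p s :=
        mul_pos (by linarith) (Real.rpow_pos_of_pos hs0 _)
      exact ne_of_gt this
    have hcount : ({s : ℝ | Real.cos s = 1}).Countable := by
      have : {s : ℝ | Real.cos s = 1} ⊆ Set.range (fun n : ℤ => (n : ℝ) * (2 * Real.pi)) := by
        intro s hs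
        rcases (Real.cos_eq_one_iff s).1 hs with ⟨n, hn⟩
        exact ⟨n, hn⟩
      exact Set.Countable.mono this (Set.countable_range _)
    have hmeas : volume (Set.Ioi (0:ℝ) \ {s : ℝ | Real.cos s = 1}) = ⊤ := by
      rw [measure_diff_null (Set.Countable.measure_zero hcount _), Real.volume_Ioi]
    have : (0:ENNReal) < volume (Function.support (snowG p) ∩ Set.Ioi 0) := by
      refine lt_of_lt_of_le ?_ (measure_mono hsub)
      rw [hmeas]; exact ENNReal.zero_lt_top
    exact this
  · exact (ae_restrict_iff' measurableSet_Ioi).2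
      (Filter.Eventually.of_forall fun s hs => snowG_nonneg p hs)
  · exact snowG_integrable hp1 hp2

/-- the elementary snowflake function `ℝ → L²`-kernel -/
def snowF (p t : ℝ) (s : ℝ) : ℂ :=
  (Complex.exp ((s * t : ℝ) * Complex.I) - 1) * ((s ^ ((-1 - p) / 2) : ℝ) : ℂ)

lemma norm_snowF_sub_sq (p t u : ℝ) {s : ℝ} (hs : 0 < s) :
    ‖snowF p t s - snowF p u s‖ ^ 2 = (2 - 2 * Real.cos (s * (t - u))) * s ^ (-1 - p) := by
  have hfact : snowF p t s - snowF p u s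
      = (Complex.exp ((s * t : ℝ) * Complex.I) - Complex.exp ((s * u : ℝ) * Complex.I))
        * ((s ^ ((-1 - p) / 2) : ℝ) : ℂ) := by
    rw [snowF, snowF]; ring
  rw [hfact, norm_mul, mul_pow, Complex.norm_real, Real.norm_eq_abs,
    abs_of_nonneg (Real.rpow_nonneg hs.le _)]
  have hw : (s ^ ((-1 - p) / 2)) ^ 2 = s ^ (-1 - p) := by
    rw [← Real.rpow_natCast (s ^ ((-1 - p) / 2)) 2, ← Real.rpow_mul hs.le]
    norm_num
  rw [hw]
  congr 1
  have h1 : ‖Complex.exp ((s * t : ℝ) * Complex.I) - Complex.exp ((s * u : ℝ) * Complex.I)‖ ^ 2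
      = (Real.cos (s * t) - Real.cos (s * u)) ^ 2
        + (Real.sin (s * t) - Real.sin (s * u)) ^ 2 := by
    rw [Complex.sq_norm, Complex.normSq_apply]
    simp only [Complex.sub_re, Complex.sub_im, Complex.exp_ofReal_mul_I_re,
      Complex.exp_ofReal_mul_I_im]
    ring
  rw [h1]
  have hc : Real.cos (s * (t - u)) = Real.cos (s * t) * Real.cos (s * u)
      + Real.sin (s * t) * Real.sin (s * u) := by
    rw [show s * (t - u) = s * t - s * u by ring, Real.cos_sub]
  nlinarith [Real.sin_sq_add_cos_sq (s * t), Real.sin_sq_add_cos_sq (s * u), hc]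


lemma snowF_contOn (p t : ℝ) : ContinuousOn (snowF p t) (Set.Ioi 0) := by
  apply ContinuousOn.mul
  · exact (Complex.continuous_exp.comp
      ((Complex.continuous_ofReal.comp (continuous_id.mul continuous_const)).mul
        continuous_const)).continuousOn.sub continuousOn_const
  · exact Complex.continuous_ofReal.comp_continuousOn (contOn_rpow _)

lemma snowF_zero (p : ℝ) : snowF p 0 = fun _ => (0:ℂ) := by
  funext s; simp [snowF]

lemma norm_snowF_sq (p t : ℝ) {s : ℝ} (hs : 0 < s) :
    ‖snowF p t s‖ ^ 2 = (2 - 2 * Real.cos (s * t)) * s ^ (-1 - p) := by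
  have := norm_snowF_sub_sq p t 0 hs
  rw [snowF_zero p] at this
  simpa using this

lemma snowF_memLp {p : ℝ} (hp1 : 1 ≤ p) (hp2 : p < 2) (t : ℝ) :
    MemLp (snowF p t) 2 μ₀ := by
  have hmeas : AEStronglyMeasurable (snowF p t) μ₀ :=
    (snowF_contOn p t).aestronglyMeasurable measurableSet_Ioi
  rw [memLp_two_iff_integrable_sq_norm hmeas]
  exact (snowGt_integrable hp1 hp2 t).congr_fun
    (fun s hs => (norm_snowF_sq p t hs).symm) measurableSet_Ioi

/-- the kernel map into `L²` -/
def snowFL {p : ℝ} (hp1 : 1 ≤ p) (hp2 : p < 2) (t : ℝ) : Lp ℂ 2 μ₀ :=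
  (snowF_memLp hp1 hp2 t).toLp _

lemma norm_snowFL_sub_sq {p : ℝ} (hp1 : 1 ≤ p) (hp2 : p < 2) (t u : ℝ) :
    ‖snowFL hp1 hp2 t - snowFL hp1 hp2 u‖ ^ 2 = |t - u| ^ p * snowK p := by
  rw [snowFL, snowFL, ← MeasureTheory.MemLp.toLp_sub]
  set hsub := (snowF_memLp hp1 hp2 t).sub (snowF_memLp hp1 hp2 u) with hsubdef
  rw [← real_inner_self_eq_norm_sq, MeasureTheory.L2.inner_def]
  have hae := MeasureTheory.MemLp.coeFn_toLp hsub
  have h1 : ∫ a, (inner ℝ ((hsub.toLp _) a) ((hsub.toLp _) a) : ℝ) ∂μ₀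
      = ∫ a, (inner ℝ (snowF p t a - snowF p u a) (snowF p t a - snowF p u a) : ℝ) ∂μ₀ := by
    refine integral_congr_ae (hae.mono fun a ha => ?_)
    simp only [ha, Pi.sub_apply]
  rw [h1]
  have h2 : ∫ a, (inner ℝ (snowF p t a - snowF p u a) (snowF p t a - snowF p u a) : ℝ) ∂μ₀
      = ∫ a in Set.Ioi (0:ℝ), (2 - 2 * Real.cos (a * (t - u))) * a ^ (-1 - p) := by
    refine setIntegral_congr_fun measurableSet_Ioi (fun a ha => ?_)
    rw [real_inner_self_eq_norm_sq]
    exact norm_snowF_sub_sq p t u ha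
  rw [h2, snowGt_integral hp1 (t - u)]


/-- For `1 ≤ p ≤ 2`, there is a real Hilbert space `H` and a map
`S : ℓ_p → H` with `‖S x - S y‖ = ‖x - y‖_p ^ (p/2)` for all `x, y ∈ ℓ_p`;
i.e. the `(p/2)`-snowflake of `ℓ_p` embeds isometrically into a Hilbert space. -/
theorem snowflake_embedding_of_lp_into_Hilbert
    (p : ℝ) (hp1 : 1 ≤ p) (hp2 : p ≤ 2) :
    ∃ (H : Type) (_ : NormedAddCommGroup H) (_ : InnerProductSpace ℝ H)
      (_ : CompleteSpace H) (S : lp (fun _ : ℕ => ℝ) (ENNReal.ofReal p) → H),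
      ∀ x y : lp (fun _ : ℕ => ℝ) (ENNReal.ofReal p),
        ‖S x - S y‖ = ‖x - y‖ ^ (p / 2) := by
  haveI : Fact ((1:ℝ≥0∞) ≤ ENNReal.ofReal p) := ⟨ENNReal.one_le_ofReal.2 hp1⟩
  rcases eq_or_lt_of_le hp2 with rfl | hplt
  · -- p = 2
    rw [show ENNReal.ofReal (2:ℝ) = (2:ℝ≥0∞) by simp [ENNReal.ofReal_ofNat]]
    refine ⟨lp (fun _ : ℕ => ℝ) 2, inferInstance, inferInstance, inferInstance, id, ?_⟩
    intro x y
    rw [show (2:ℝ)/2 = 1 by norm_num, Real.rpow_one]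
    rfl
  · -- p < 2
    have hp0 : 0 < p := by linarith
    have hq : (ENNReal.ofReal p).toReal = p := ENNReal.toReal_ofReal hp0.le
    have hK := snowK_pos hp1 hplt
    set c : ℝ := Real.sqrt (snowK p)⁻¹ with hc
    have hc2 : c ^ 2 * snowK p = 1 := by
      rw [hc, Real.sq_sqrt (by positivity)]
      field_simp
    have hcoord : ∀ t u : ℝ,
        ‖c • snowFL hp1 hplt t - c • snowFL hp1 hplt u‖ ^ (2:ℕ) = |t - u| ^ p := by
      intro t u
      rw [← smul_sub, norm_smul, mul_pow, norm_snowFL_sub_sq hp1 hplt, Real.norm_eq_abs,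
        sq_abs]
      calc c ^ 2 * (|t - u| ^ p * snowK p) = (c ^ 2 * snowK p) * |t - u| ^ p := by ring
        _ = |t - u| ^ p := by rw [hc2, one_mul]
    have hkey : ∀ t u : ℝ,
        ‖c • snowFL hp1 hplt t - c • snowFL hp1 hplt u‖ ^ ((2:ℝ≥0∞).toReal) = |t - u| ^ p := by
      intro t u
      rw [show ((2:ℝ≥0∞).toReal) = (((2:ℕ)):ℝ) by norm_num, Real.rpow_natCast]
      exact hcoord t u
    have hFL0 : snowFL hp1 hplt 0 = 0 := by
      rw [snowFL, ← MeasureTheory.MemLp.toLp_zero (MeasureTheory.MemLp.zero : MemLp (0 : ℝ → ℂ) (2 : ℝ≥0∞) μ₀)]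
      rw [MeasureTheory.MemLp.toLp_eq_toLp_iff]
      exact Filter.EventuallyEq.of_eq (snowF_zero p)
    have hsingle : ∀ t : ℝ, ‖c • snowFL hp1 hplt t‖ ^ ((2:ℝ≥0∞).toReal) = |t| ^ p := by
      intro t
      have := hkey t 0
      rw [hFL0, smul_zero, sub_zero, sub_zero] at this
      exact this
    have hmem : ∀ x : lp (fun _ : ℕ => ℝ) (ENNReal.ofReal p),
        Memℓp (fun i => c • snowFL hp1 hplt (x i)) 2 := by
      intro x
      apply memℓp_gen
      have hx : Summable fun i => ‖x i‖ ^ p := by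
        have h := lp.memℓp x
        rw [memℓp_gen_iff (by rw [hq]; exact hp0)] at h
        simpa [hq] using h
      have : (fun i => ‖c • snowFL hp1 hplt (x i)‖ ^ ((2:ℝ≥0∞).toReal))
          = fun i => ‖x i‖ ^ p := by
        funext i
        rw [hsingle (x i), Real.norm_eq_abs]
      rw [this]
      exact hx
    refine ⟨lp (fun _ : ℕ => MeasureTheory.Lp ℂ 2 μ₀) 2, inferInstance, inferInstance,
      inferInstance, fun x => ⟨fun i => c • snowFL hp1 hplt (x i), hmem x⟩, ?_⟩
    intro x y
    have hsum : Summable fun i => ‖x i - y i‖ ^ p := by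
      have h := lp.memℓp (x - y)
      rw [memℓp_gen_iff (by rw [hq]; exact hp0)] at h
      have hxy : ∀ i, (x - y) i = x i - y i := fun i => by
        rw [lp.coeFn_sub]; rfl
      simp only [hq] at h
      refine h.congr fun i => ?_
      rw [hxy i]
    have hcoords : ∀ i : ℕ,
        ((⟨fun i => c • snowFL hp1 hplt (x i), hmem x⟩ : lp (fun _ : ℕ => MeasureTheory.Lp ℂ 2 μ₀) 2)
          - ⟨fun i => c • snowFL hp1 hplt (y i), hmem y⟩) i
        = c • snowFL hp1 hplt (x i) - c • snowFL hp1 hplt (y i) := by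
      intro i
      rw [lp.coeFn_sub]
      rfl
    rw [lp.norm_eq_tsum_rpow (by norm_num : 0 < (2:ℝ≥0∞).toReal)]
    have htsum : (∑' i : ℕ,
        ‖((⟨fun i => c • snowFL hp1 hplt (x i), hmem x⟩ : lp (fun _ : ℕ => MeasureTheory.Lp ℂ 2 μ₀) 2)
          - ⟨fun i => c • snowFL hp1 hplt (y i), hmem y⟩) i‖ ^ ((2:ℝ≥0∞).toReal))
        = ∑' i : ℕ, ‖x i - y i‖ ^ p := by
      refine tsum_congr fun i => ?_
      rw [hcoords i, hkey (x i) (y i), Real.norm_eq_abs]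
    rw [htsum]
    have hnorm : (∑' i : ℕ, ‖x i - y i‖ ^ p) = ‖x - y‖ ^ p := by
      have h := lp.norm_rpow_eq_tsum (p := ENNReal.ofReal p) (by rw [hq]; exact hp0) (x - y)
      rw [hq] at h
      rw [h]
      refine tsum_congr fun i => ?_
      have hxy : (x - y) i = x i - y i := by rw [lp.coeFn_sub]; rfl
      rw [hxy]
    rw [hnorm]
    rw [show (2:ℝ≥0∞).toReal = (2:ℝ) by norm_num]
    rw [← Real.rpow_mul (norm_nonneg _)]
    congr 1
    ring

end SnowflakeAux
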